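/- For a positive integer d, \binom{3d-1}{d-1} \not\equiv \binom{6d-1}{2d-1} \pmod{8} if and only if d is odd and binarily well-spaced; in that case \binom{6d-1}{2d-1} - \binom{3d-1}{d-1} \equiv 4 \pmod 8. -/

import Mathlib

open Finset

/-- A positive integer is binarily well-spaced if its binary expansion has
no two consecutive ones. -/
def WellSpaced (d : ℕ) : Prop := ∀ i, ¬ (d.testBit i ∧ d.testBit (i + 1))

namespace Stmt17

/-- product of first m odd numbers -/
def O (m : ℕ) : ℕ := ∏ j ∈ Finset.range m, (2*j+1)

lemma O_succ (m : ℕ) : O (m+1) = O m * (2*m+1) := Finset.prod_range_succ _ m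

lemma O_odd (m : ℕ) : Odd (O m) := by
  induction m with
  | zero => simp [O]
  | succ m ih =>
    rw [O_succ]
    exact ih.mul (by simp [Nat.odd_iff, Nat.add_mul_mod_self_left])

lemma factorial_eq (m : ℕ) : Nat.factorial (2*m) = 2^m * Nat.factorial m * O m := by
  induction m with
  | zero => simp [O]
  | succ m ih =>
    have h : 2*(m+1) = (2*m+1) + 1 := by ring
    rw [h, Nat.factorial_succ, Nat.factorial_succ, ih, O_succ, Nat.factorial_succ]
    ring

lemma star (d : ℕ) :
    (6*d).choose (2*d) * O d * O (2*d) = (3*d).choose d * O (3*d) := by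
  have h1 : (6*d).choose (2*d) * Nat.factorial (2*d) * Nat.factorial (4*d)
      = Nat.factorial (6*d) := by
    have := Nat.choose_mul_factorial_mul_factorial (n := 6*d) (k := 2*d) (by omega)
    rwa [show 6*d - 2*d = 4*d by omega] at this
  have h2 : (3*d).choose d * Nat.factorial d * Nat.factorial (2*d)
      = Nat.factorial (3*d) := by
    have := Nat.choose_mul_factorial_mul_factorial (n := 3*d) (k := d) (by omega)
    rwa [show 3*d - d = 2*d by omega] at this
  have e6 : Nat.factorial (6*d) = 2^(3*d) * Nat.factorial (3*d) * O (3*d) := by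
    have := factorial_eq (3*d); rwa [show 2*(3*d) = 6*d by ring] at this
  have e4 : Nat.factorial (4*d) = 2^(2*d) * Nat.factorial (2*d) * O (2*d) := by
    have := factorial_eq (2*d); rwa [show 2*(2*d) = 4*d by ring] at this
  have e2 : Nat.factorial (2*d) = 2^d * Nat.factorial d * O d := factorial_eq d
  have hM : 0 < Nat.factorial (2*d) * Nat.factorial (4*d) :=
    Nat.mul_pos (Nat.factorial_pos _) (Nat.factorial_pos _)
  apply Nat.eq_of_mul_eq_mul_right hM
  calc (6*d).choose (2*d) * O d * O (2*d) * (Nat.factorial (2*d) * Nat.factorial (4*d))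
      = ((6*d).choose (2*d) * Nat.factorial (2*d) * Nat.factorial (4*d)) * (O d * O (2*d)) := by
        ring
    _ = Nat.factorial (6*d) * (O d * O (2*d)) := by rw [h1]
    _ = 2^(3*d) * Nat.factorial (3*d) * O (3*d) * (O d * O (2*d)) := by rw [e6]
    _ = 2^(3*d) * ((3*d).choose d * Nat.factorial d * Nat.factorial (2*d)) * O (3*d)
        * (O d * O (2*d)) := by rw [h2]
    _ = (3*d).choose d * O (3*d) * (Nat.factorial (2*d) * Nat.factorial (4*d)) := by
        rw [e4, e2, show 3*d = d + 2*d by ring, pow_add]; ring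

end Stmt17

namespace Stmt17

lemma choose3 {d : ℕ} (hd : 0 < d) : (3*d).choose d = 3 * ((3*d-1).choose (d-1)) := by
  have h := Nat.add_one_mul_choose_eq (3*d-1) (d-1)
  rw [show 3*d-1+1 = 3*d by omega, show d-1+1 = d by omega] at h
  -- h : 3*d * (3*d-1).choose (d-1) = (3*d).choose d * d
  have : d * (3 * ((3*d-1).choose (d-1))) = d * ((3*d).choose d) := by
    calc d * (3 * ((3*d-1).choose (d-1))) = 3 * d * (3*d-1).choose (d-1) := by ring
      _ = (3*d).choose d * d := h
      _ = d * ((3*d).choose d) := by ring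
  exact (Nat.eq_of_mul_eq_mul_left hd this).symm

/-- key numeric relation: B * O d = A * Q -/
lemma key_nat {d : ℕ} (hd : 0 < d) :
    (6*d-1).choose (2*d-1) * O d
      = (3*d-1).choose (d-1) * ∏ j ∈ Finset.range d, (2*(2*d+j)+1) := by
  have hB : (6*d).choose (2*d) = 3 * ((6*d-1).choose (2*d-1)) := by
    have := choose3 (d := 2*d) (by omega)
    rwa [show 3*(2*d) = 6*d by ring] at this
  have hA : (3*d).choose d = 3 * ((3*d-1).choose (d-1)) := choose3 hd
  have h := star d
  rw [hA, hB] at h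
  have hO3 : O (3*d) = O (2*d) * ∏ j ∈ Finset.range d, (2*(2*d+j)+1) := by
    have := Finset.prod_range_add (fun j => 2*j+1) (2*d) d
    rw [show 2*d+d = 3*d by ring] at this
    exact this
  rw [hO3] at h
  have hO2 : 0 < O (2*d) := (O_odd (2*d)).pos
  apply Nat.eq_of_mul_eq_mul_left hO2
  have h3 : 0 < 3 := by norm_num
  apply Nat.eq_of_mul_eq_mul_left h3
  calc 3 * (O (2*d) * ((6*d-1).choose (2*d-1) * O d))
      = 3 * ((6*d-1).choose (2*d-1)) * O d * O (2*d) := by ring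
    _ = 3 * ((3*d-1).choose (d-1)) * (O (2*d) * ∏ j ∈ Finset.range d, (2*(2*d+j)+1)) := h
    _ = 3 * (O (2*d) * ((3*d-1).choose (d-1) * ∏ j ∈ Finset.range d, (2*(2*d+j)+1))) := by ring

lemma h8 : (8 : ZMod 8) = 0 := rfl

lemma pow_self (d : ℕ) : ((1 : ZMod 8) + 4*(d : ZMod 8))^d = 1 + 4*(d : ZMod 8) := by
  rcases Nat.even_or_odd d with ⟨k, hk⟩ | ⟨k, hk⟩
  · have hz : (4:ZMod 8)*(d:ZMod 8) = 0 := by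
      subst hk; push_cast; linear_combination (k : ZMod 8) * h8
    rw [hz]; simp
  · have hsq : ((1 : ZMod 8) + 4*(d : ZMod 8))^2 = 1 := by
      ring_nf
      linear_combination ((d:ZMod 8) + 2*(d:ZMod 8)^2) * h8
    subst hk
    rw [pow_add, pow_mul, hsq, one_pow, pow_one, one_mul]

lemma Qcast (d : ℕ) :
    ((∏ j ∈ Finset.range d, (2*(2*d+j)+1) : ℕ) : ZMod 8)
      = (1 + 4*(d : ZMod 8)) * ((O d : ℕ) : ZMod 8) := by
  push_cast [O]
  calc (∏ j ∈ Finset.range d, (2*(2*(d:ZMod 8)+(j:ZMod 8))+1))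
      = ∏ j ∈ Finset.range d, ((1+4*(d:ZMod 8)) * (2*(j:ZMod 8)+1)) :=
        Finset.prod_congr rfl (fun j _ => by
          linear_combination (-((d:ZMod 8)*(j:ZMod 8))) * h8)
    _ = (1+4*(d:ZMod 8))^d * ∏ j ∈ Finset.range d, (2*(j:ZMod 8)+1) := by
        rw [Finset.prod_mul_distrib, Finset.prod_const, Finset.card_range]
    _ = (1 + 4*(d : ZMod 8)) * ∏ j ∈ Finset.range d, (2*(j:ZMod 8)+1) := by
        rw [pow_self]

lemma key_zmod {d : ℕ} (hd : 0 < d) :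
    (((6*d-1).choose (2*d-1) : ℕ) : ZMod 8)
      = (((3*d-1).choose (d-1) : ℕ) : ZMod 8) * (1 + 4*(d : ZMod 8)) := by
  have h := congrArg (fun n : ℕ => (n : ZMod 8)) (key_nat hd)
  simp only [Nat.cast_mul] at h
  rw [Qcast d] at h
  have hu : IsUnit ((O d : ℕ) : ZMod 8) := by
    rw [ZMod.isUnit_iff_coprime]
    have : Nat.Coprime (O d) 2 := by
      rw [Nat.coprime_comm, Nat.Prime.coprime_iff_not_dvd Nat.prime_two]
      simpa [Nat.odd_iff, Nat.two_dvd_ne_zero] using (O_odd d)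
    simpa using this.pow_right 3
  apply hu.mul_left_cancel
  calc ((O d : ℕ) : ZMod 8) * (((6*d-1).choose (2*d-1) : ℕ) : ZMod 8)
      = (((6*d-1).choose (2*d-1) : ℕ) : ZMod 8) * ((O d : ℕ) : ZMod 8) := by ring
    _ = (((3*d-1).choose (d-1) : ℕ) : ZMod 8) * ((1 + 4*(d:ZMod 8)) * ((O d : ℕ) : ZMod 8)) := h
    _ = ((O d : ℕ) : ZMod 8) * ((((3*d-1).choose (d-1) : ℕ) : ZMod 8) * (1 + 4*(d:ZMod 8))) := by
          ring

end Stmt17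

namespace Stmt17

lemma odd_choose_add : ∀ n a b : ℕ, a + b = n →
    (Odd ((a+b).choose a) ↔ ∀ i, ¬(a.testBit i ∧ b.testBit i)) := by
  intro n
  induction n using Nat.strong_induction_on with
  | _ n ih =>
    intro a b hab
    rcases Nat.eq_zero_or_pos n with hn | hn
    · have ha : a = 0 := by omega
      have hb : b = 0 := by omega
      subst ha; subst hb
      simp [Nat.testBit]
    haveI : Fact (Nat.Prime 2) := ⟨Nat.prime_two⟩
    have lucas := Choose.choose_modEq_choose_mod_mul_choose_div_nat
      (n := a+b) (k := a) (p := 2)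
    by_cases hodd : a % 2 = 1 ∧ b % 2 = 1
    · -- both odd: choose even, and bit 0 clash
      have h0 : (a+b) % 2 = 0 := by omega
      have : ((a+b).choose a) % 2 = 0 := by
        have := lucas
        unfold Nat.ModEq at this
        rw [h0, hodd.1] at this
        simpa [Nat.choose] using this
      constructor
      · intro h; rw [Nat.odd_iff] at h; omega
      · intro h
        exact absurd ⟨by simp [Nat.testBit_zero, hodd.1], by simp [Nat.testBit_zero, hodd.2]⟩
          (h 0)
    · -- at least one even: first Lucas factor is 1
      have hfac : ((a+b) % 2).choose (a % 2) = 1 := by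
        have ha2 := Nat.mod_two_eq_zero_or_one a
        have hb2 := Nat.mod_two_eq_zero_or_one b
        have hab2 : (a+b) % 2 = (a % 2 + b % 2) % 2 := by omega
        rcases ha2 with h1 | h1 <;> rcases hb2 with h2 | h2 <;>
          first
          | (exfalso; omega)
          | simp_all
      have hdiv : (a+b)/2 = a/2 + b/2 := by omega
      have hrec : Odd ((a+b).choose a) ↔ Odd ((a/2 + b/2).choose (a/2)) := by
        have := lucas
        unfold Nat.ModEq at this
        rw [hfac, one_mul, hdiv] at this
        rw [Nat.odd_iff, Nat.odd_iff, this]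
      have hlt : a/2 + b/2 < n := by omega
      rw [hrec, ih _ hlt (a/2) (b/2) rfl]
      constructor
      · intro h i
        cases i with
        | zero =>
          rw [Nat.testBit_zero, Nat.testBit_zero]
          intro ⟨p1, p2⟩
          simp only [decide_eq_true_eq] at p1 p2
          omega
        | succ i =>
          rw [Nat.testBit_succ, Nat.testBit_succ]
          exact h i
      · intro h i
        have := h (i+1)
        rw [Nat.testBit_succ, Nat.testBit_succ] at this
        exact this

lemma odd_A_iff {d : ℕ} (hd : 0 < d) :
    Odd ((3*d-1).choose (d-1)) ↔ WellSpaced d := by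
  have h3 : Odd ((3*d).choose d) ↔ Odd ((3*d-1).choose (d-1)) := by
    rw [choose3 hd]
    constructor
    · rintro ⟨k, hk⟩
      rw [Nat.odd_iff] at *
      omega
    · intro h
      exact (by decide : Odd 3).mul h
  have key := odd_choose_add (d + 2*d) d (2*d) rfl
  rw [show d + 2*d = 3*d by ring] at key
  rw [← h3, key]
  have tb2 : ∀ i, (2*d).testBit (i+1) = d.testBit i := by
    intro i
    rw [Nat.testBit_succ, show 2*d/2 = d by omega]
  have tb20 : (2*d).testBit 0 = false := by
    simp [Nat.testBit_zero, Nat.mul_mod_right]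
  constructor
  · intro h i hcon
    apply h (i+1)
    refine ⟨hcon.2, ?_⟩
    rw [tb2]
    exact hcon.1
  · intro h i
    cases i with
    | zero =>
      rw [tb20]
      simp
    | succ i =>
      rw [tb2]
      intro ⟨p1, p2⟩
      exact h i ⟨p2, p1⟩

end Stmt17

theorem stmt_17 (d : ℕ) (hd : 0 < d) :
    (¬ ((Nat.choose (3*d - 1) (d - 1) : ℤ) ≡ (Nat.choose (6*d - 1) (2*d - 1) : ℤ) [ZMOD 8]) ↔
      Odd d ∧ WellSpaced d) ∧
    (Odd d ∧ WellSpaced d →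
      ((Nat.choose (6*d - 1) (2*d - 1) : ℤ) - (Nat.choose (3*d - 1) (d - 1) : ℤ)) ≡ 4 [ZMOD 8]) := by
  have key := Stmt17.key_zmod hd
  have hAiff := Stmt17.odd_A_iff hd
  have hconv : (((3*d-1).choose (d-1) : ℤ) ≡ ((6*d-1).choose (2*d-1) : ℤ) [ZMOD 8]) ↔
      (((3*d-1).choose (d-1) : ℕ) : ZMod 8) = (((6*d-1).choose (2*d-1) : ℕ) : ZMod 8) := by
    have h2 := (ZMod.intCast_eq_intCast_iff ((3*d-1).choose (d-1) : ℤ)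
      ((6*d-1).choose (2*d-1) : ℤ) 8).symm
    push_cast at h2
    exact h2
  have case1 : Odd d ∧ WellSpaced d →
      (((6*d-1).choose (2*d-1) : ℕ) : ZMod 8) - (((3*d-1).choose (d-1) : ℕ) : ZMod 8) = 4 := by
    rintro ⟨⟨k, hk⟩, hws⟩
    obtain ⟨m, hm⟩ := hAiff.mpr hws
    rw [key, hm, hk]
    push_cast
    linear_combination (2*(m:ZMod 8)*(k:ZMod 8) + (m:ZMod 8) + (k:ZMod 8)) * Stmt17.h8
  have case2 : ¬ (Odd d ∧ WellSpaced d) →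
      (((6*d-1).choose (2*d-1) : ℕ) : ZMod 8) = (((3*d-1).choose (d-1) : ℕ) : ZMod 8) := by
    intro hcon
    rw [key]
    rcases Classical.em (Odd d) with hod | hod
    · -- then ¬ WellSpaced d, so A even
      have hws : ¬ WellSpaced d := fun hw => hcon ⟨hod, hw⟩
      have : ¬ Odd ((3*d-1).choose (d-1)) := fun h => hws (hAiff.mp h)
      obtain ⟨m, hm⟩ := Nat.not_odd_iff_even.mp this
      rw [hm]
      push_cast
      linear_combination ((m:ZMod 8)*(d:ZMod 8)) * Stmt17.h8
    · obtain ⟨k, hk⟩ := Nat.not_odd_iff_even.mp hod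
      have hdz : (d : ZMod 8) = (k:ZMod 8) + k := by rw [hk]; push_cast; ring
      rw [hdz]
      linear_combination (((3*d-1).choose (d-1) : ZMod 8)*(k:ZMod 8)) * Stmt17.h8
  refine ⟨⟨fun hne => ?_, fun h => ?_⟩, fun h => ?_⟩
  · by_contra hcon
    exact hne (hconv.mpr (case2 hcon).symm)
  · intro hc
    rw [hconv] at hc
    have := case1 h
    rw [← hc, sub_self] at this
    exact absurd this (by decide)
  · have h2 := (ZMod.intCast_eq_intCast_iff
      (((6*d-1).choose (2*d-1) : ℤ) - ((3*d-1).choose (d-1) : ℤ)) 4 8)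
    push_cast at h2
    exact h2.mp (case1 h)
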